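/- Let a, b, c : I → ℝ be differentiable functions on an open interval I satisfying b' − a' = a² − b² and c' − a' = a² − c², with a, b, c pairwise distinct at every point, and let P := a² + b² + c² − ab − bc − ac be nowhere zero. Define α² = (a−b)⁴/(4P) for a differentiable function α satisfying α' = −α(a + b − c). Then at every point of I, 6abc = a²b + ab² + a²c + ac² + b²c + bc². -/

import Mathlib

/-- Key ODE computation in the proof of Proposition 3.4. -/
theorem stmt_2 (A B : ℝ) (a b c α : ℝ → ℝ)
    (ha : DifferentiableOn ℝ a (Set.Ioo A B)) (hb : DifferentiableOn ℝ b (Set.Ioo A B))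
    (hc : DifferentiableOn ℝ c (Set.Ioo A B)) (hα : DifferentiableOn ℝ α (Set.Ioo A B))
    (hode1 : ∀ s ∈ Set.Ioo A B, deriv b s - deriv a s = (a s) ^ 2 - (b s) ^ 2)
    (hode2 : ∀ s ∈ Set.Ioo A B, deriv c s - deriv a s = (a s) ^ 2 - (c s) ^ 2)
    (hdist : ∀ s ∈ Set.Ioo A B, a s ≠ b s ∧ b s ≠ c s ∧ a s ≠ c s)
    (hP : ∀ s ∈ Set.Ioo A B,
      (a s) ^ 2 + (b s) ^ 2 + (c s) ^ 2 - a s * b s - b s * c s - a s * c s ≠ 0)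
    (hαsq : ∀ s ∈ Set.Ioo A B, (α s) ^ 2 = (a s - b s) ^ 4 /
      (4 * ((a s) ^ 2 + (b s) ^ 2 + (c s) ^ 2 - a s * b s - b s * c s - a s * c s)))
    (hα0 : ∀ s ∈ Set.Ioo A B, α s ≠ 0)
    (hα' : ∀ s ∈ Set.Ioo A B, deriv α s = - α s * (a s + b s - c s)) :
    ∀ s ∈ Set.Ioo A B,
      6 * (a s * b s * c s) =
        (a s) ^ 2 * b s + a s * (b s) ^ 2 + (a s) ^ 2 * c s + a s * (c s) ^ 2 +
          (b s) ^ 2 * c s + b s * (c s) ^ 2 := by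
  intro s hs
  have hmem : Set.Ioo A B ∈ nhds s := isOpen_Ioo.mem_nhds hs
  have Ha : HasDerivAt a (deriv a s) s :=
    ((ha s hs).differentiableAt hmem).hasDerivAt
  have Hb : HasDerivAt b (deriv b s) s :=
    ((hb s hs).differentiableAt hmem).hasDerivAt
  have Hc : HasDerivAt c (deriv c s) s :=
    ((hc s hs).differentiableAt hmem).hasDerivAt
  have Hα : HasDerivAt α (deriv α s) s :=
    ((hα s hs).differentiableAt hmem).hasDerivAt
  -- the function F = α² * 4P − (a−b)⁴ vanishes on Ioo A B
  set F : ℝ → ℝ := fun t => (α t) ^ 2 *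
      (4 * ((a t) ^ 2 + (b t) ^ 2 + (c t) ^ 2 - a t * b t - b t * c t - a t * c t))
      - (a t - b t) ^ 4 with hF
  have hF0 : ∀ t ∈ Set.Ioo A B, F t = 0 := by
    intro t ht
    have h1 := hαsq t ht
    have h2 := hP t ht
    simp only [hF]
    rw [h1]
    field_simp
    ring
  -- F has an explicit derivative at s
  have HPd : HasDerivAt (fun t => (a t) ^ 2 + (b t) ^ 2 + (c t) ^ 2
      - a t * b t - b t * c t - a t * c t)
      (2 * a s ^ 1 * deriv a s + 2 * b s ^ 1 * deriv b s + 2 * c s ^ 1 * deriv c s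
        - (deriv a s * b s + a s * deriv b s) - (deriv b s * c s + b s * deriv c s)
        - (deriv a s * c s + a s * deriv c s)) s :=
    (((((Ha.pow 2).add (Hb.pow 2)).add (Hc.pow 2)).sub (Ha.mul Hb)).sub
      (Hb.mul Hc)).sub (Ha.mul Hc)
  have HFd : HasDerivAt F
      ((2 * α s ^ 1 * deriv α s) *
        (4 * ((a s) ^ 2 + (b s) ^ 2 + (c s) ^ 2 - a s * b s - b s * c s - a s * c s))
       + (α s) ^ 2 * (4 * (2 * a s ^ 1 * deriv a s + 2 * b s ^ 1 * deriv b s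
          + 2 * c s ^ 1 * deriv c s
          - (deriv a s * b s + a s * deriv b s) - (deriv b s * c s + b s * deriv c s)
          - (deriv a s * c s + a s * deriv c s)))
       - 4 * (a s - b s) ^ 3 * (deriv a s - deriv b s)) s :=
    ((Hα.pow 2).mul (HPd.const_mul 4)).sub ((Ha.sub Hb).pow 4)
  -- F is eventually 0, so its derivative is 0
  have hFzero : F =ᶠ[nhds s] (fun _ => (0 : ℝ)) :=
    Filter.eventuallyEq_of_mem hmem hF0
  have HFd0 : HasDerivAt F 0 s := by
    have : HasDerivAt (fun _ : ℝ => (0 : ℝ)) 0 s := hasDerivAt_const s 0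
    exact this.congr_of_eventuallyEq hFzero
  have hD0 := HFd.unique HFd0
  -- now substitute the ODEs
  have h1 := hode1 s hs
  have h2 := hode2 s hs
  have h3 := hα' s hs
  have h4 := hαsq s hs
  have h5 := hP s hs
  have h6 := (hdist s hs).1
  have hab : a s - b s ≠ 0 := sub_ne_zero.mpr h6
  set as := a s; set bs := b s; set cs := c s; set αs := α s
  set Ps := as ^ 2 + bs ^ 2 + cs ^ 2 - as * bs - bs * cs - as * cs with hPs
  rw [h3, h4] at hD0
  have hb' : deriv b s = deriv a s + (as ^ 2 - bs ^ 2) := by linarith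
  have hc' : deriv c s = deriv a s + (as ^ 2 - cs ^ 2) := by linarith
  rw [hb', hc'] at hD0
  -- clear denominators in hD0
  have h4P : (4 : ℝ) * Ps ≠ 0 := by positivity
  field_simp at hD0
  -- From hD0 and αs ≠ 0 (via h4 : αs² = (as−bs)⁴/(4Ps)) derive the key identity
  have hmul : αs ^ 2 * (4 * Ps) = (as - bs) ^ 4 := by
    rw [h4]; field_simp
  have key4 : 4 * (as - bs) ^ 4 *
      ((as ^ 2 - bs ^ 2) * (2 * bs - as - cs) + (as ^ 2 - cs ^ 2) * (2 * cs - as - bs)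
        + 2 * (as + bs + cs) * Ps) = 0 := by
    linear_combination 4 * hD0 + (8 * Ps * (as + bs - cs)) * hmul
  have hDne : (4 : ℝ) * (as - bs) ^ 4 ≠ 0 := by positivity
  have key : (as ^ 2 - bs ^ 2) * (2 * bs - as - cs) + (as ^ 2 - cs ^ 2) * (2 * cs - as - bs)
      + 2 * (as + bs + cs) * Ps = 0 := by
    rcases mul_eq_zero.mp key4 with h | h
    · exact absurd h hDne
    · exact h
  rw [hPs] at key
  linear_combination -key
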